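/- Let ξ = (ξ_n)_{n∈ℕ} be a sequence in H. Then: (i) Q_ξ is densely defined, D_ξ ⊆ Q_ξ, and Q_ξ* = C_ξ; (ii) if D(C_ξ) is dense in H, then Q_ξ ⊆ C_ξ*; (iii) Q_ξ is closable if and only if D(C_ξ) is dense in H; (iv) Q_ξ is closed if and only if D(C_ξ) is dense in H and C_ξ* = Q_ξ; (v) S_ξ ⊆ W_ξ and W_ξ = Q_ξ C_ξ (equality of operators, including domains). -/

import Mathlib

noncomputable section
open scoped InnerProductSpace ComplexInnerProductSpace ComplexConjugate ENNReal
open Filter Topology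

/- `H` is a separable complex Hilbert space. -/
variable {H : Type} [NormedAddCommGroup H] [InnerProductSpace ℂ H] [CompleteSpace H]
  [TopologicalSpace.SeparableSpace H]

/-- The space `ℓ²(ℕ)` of square-summable complex sequences. -/
abbrev l2 : Type := lp (fun _ : ℕ => ℂ) 2

/-- The domain of the analysis operator `C_ξ`:
`D(C_ξ) = {f ∈ H : Σ_n |⟨f,ξ_n⟩|² < ∞}`.  (The paper's inner product `⟨f,ξ_n⟩`, linear in `f`,
is `⟪ξ n, f⟫_ℂ` in Mathlib's convention.) -/
def domC (ξ : ℕ → H) : Set H := {f : H | Memℓp (fun n => ⟪ξ n, f⟫_ℂ) 2}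

open Classical in
/-- The analysis operator `C_ξ f = (⟨f,ξ_n⟩)_n`, with junk value `0` outside of its domain. -/
def Cfun (ξ : ℕ → H) (f : H) : l2 :=
  if h : Memℓp (fun n => ⟪ξ n, f⟫_ℂ) 2 then ⟨_, h⟩ else 0

/-- The domain of the synthesis operator `D_ξ`:
`D(D_ξ) = {(c_n) ∈ ℓ² : Σ_n c_n ξ_n converges in norm in H}`. -/
def domD (ξ : ℕ → H) : Set l2 :=
  {c : l2 | ∃ L : H, Tendsto (fun k : ℕ => ∑ n ∈ Finset.range k, c n • ξ n) atTop (𝓝 L)}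

/-- The domain of the frame operator `S_ξ`:
`D(S_ξ) = {f ∈ H : Σ_n ⟨f,ξ_n⟩ ξ_n converges in norm in H}`. -/
def domS (ξ : ℕ → H) : Set H :=
  {f : H | ∃ L : H, Tendsto (fun k : ℕ => ∑ n ∈ Finset.range k, ⟪ξ n, f⟫_ℂ • ξ n) atTop (𝓝 L)}

/-- The domain of the generalized frame operator `T_ξ`: those `f ∈ D(C_ξ)` for which there is
`h` in `H_ξ = closure D(C_ξ)` with `Σ_n ⟨f,ξ_n⟩⟨ξ_n,g⟩ = ⟨h,g⟩` for all `g ∈ D(C_ξ)`. -/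
def domT (ξ : ℕ → H) : Set H :=
  {f : H | f ∈ domC ξ ∧ ∃ h ∈ closure (domC ξ), ∀ g ∈ domC ξ,
    ∑' n : ℕ, ⟪ξ n, f⟫_ℂ * ⟪g, ξ n⟫_ℂ = ⟪g, h⟫_ℂ}

/-- The domain of `Q_ξ`: those `(c_n) ∈ ℓ²` whose partial sums `Σ_{n<k} c_n ξ_n`
converge weakly in `H`. -/
def domQ (ξ : ℕ → H) : Set l2 :=
  {c : l2 | ∃ L : H, ∀ y : H,
    Tendsto (fun k : ℕ => ⟪y, ∑ n ∈ Finset.range k, c n • ξ n⟫_ℂ) atTop (𝓝 ⟪y, L⟫_ℂ)}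

/-- The domain of the weak frame operator `W_ξ`: those `f ∈ H` whose partial sums
`Σ_{n<k} ⟨f,ξ_n⟩ ξ_n` converge weakly in `H`. -/
def domW (ξ : ℕ → H) : Set H :=
  {f : H | ∃ L : H, ∀ y : H,
    Tendsto (fun k : ℕ => ⟪y, ∑ n ∈ Finset.range k, ⟪ξ n, f⟫_ℂ • ξ n⟫_ℂ) atTop (𝓝 ⟪y, L⟫_ℂ)}


set_option linter.unusedSectionVars false
-- basic: partial-sum inner formula
lemma psum_inner (ξ : ℕ → H) (y : H) (c : ℕ → ℂ) (k : ℕ) :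
    ⟪y, ∑ n ∈ Finset.range k, c n • ξ n⟫_ℂ = ∑ n ∈ Finset.range k, c n * ⟪y, ξ n⟫_ℂ := by
  simp [inner_sum, inner_smul_right]

-- Cfun coercion
lemma Cfun_apply (ξ : ℕ → H) {f : H} (hf : f ∈ domC ξ) (n : ℕ) :
    (Cfun ξ f) n = ⟪ξ n, f⟫_ℂ := by
  have hf' : Memℓp (fun n => ⟪ξ n, f⟫_ℂ) 2 := hf
  simp only [Cfun, dif_pos hf']

-- uniqueness helper
lemma Q_spec (ξ : ℕ → H) (Qfun : l2 → H)
    (hQ : ∀ c ∈ domQ ξ, ∀ y : H,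
      Tendsto (fun k : ℕ => ⟪y, ∑ n ∈ Finset.range k, c n • ξ n⟫_ℂ) atTop (𝓝 ⟪y, Qfun c⟫_ℂ))
    {c : l2} {L : H}
    (h : ∀ y : H, Tendsto (fun k : ℕ => ⟪y, ∑ n ∈ Finset.range k, c n • ξ n⟫_ℂ) atTop
      (𝓝 ⟪y, L⟫_ℂ)) : c ∈ domQ ξ ∧ Qfun c = L := by
  have hc : c ∈ domQ ξ := ⟨L, h⟩
  exact ⟨hc, ext_inner_left ℂ fun y => tendsto_nhds_unique (hQ c hc y) (h y)⟩

-- truncation coefficients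
lemma trunc_coe (c : l2) (k n : ℕ) :
    (∑ i ∈ Finset.range k, lp.single 2 i (c i)) n = if n ∈ Finset.range k then c n else 0 := by
  rw [lp.coeFn_sum]
  simp only [Finset.sum_apply, lp.single_apply, Pi.single_apply, Finset.sum_ite_eq, Finset.sum_dite_eq]

-- truncations are in domQ
lemma trunc_mem_domQ (ξ : ℕ → H) (c : l2) (k : ℕ) :
    (∑ i ∈ Finset.range k, lp.single 2 i (c i)) ∈ domQ ξ := by
  refine ⟨∑ n ∈ Finset.range k, c n • ξ n, fun y => ?_⟩
  refine Tendsto.congr' ?_ tendsto_const_nhds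
  filter_upwards [eventually_ge_atTop k] with j hj
  congr 1
  rw [← Finset.sum_subset (Finset.range_subset_range.2 hj)
      (fun n _ hn => by rw [trunc_coe]; simp [lp.single_apply, Pi.single_apply, Finset.sum_dite_eq, hn])]
  exact (Finset.sum_congr rfl fun n hn =>
    by rw [trunc_coe]; simp [lp.single_apply, Pi.single_apply, Finset.sum_dite_eq, hn]).symm

-- density of domQ
lemma domQ_dense (ξ : ℕ → H) : Dense (domQ ξ) := by
  intro c
  have h1 : Tendsto (fun k => ∑ i ∈ Finset.range k, lp.single 2 i (c i)) atTop (𝓝 c) :=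
    (lp.hasSum_single (by norm_num) c).tendsto_sum_nat
  exact mem_closure_of_tendsto h1 (Eventually.of_forall fun k => trunc_mem_domQ ξ c k)

-- single sequences
lemma single_weak (ξ : ℕ → H) (m : ℕ) (y : H) :
    Tendsto (fun k : ℕ => ⟪y, ∑ n ∈ Finset.range k, (lp.single 2 m (1:ℂ) : l2) n • ξ n⟫_ℂ)
      atTop (𝓝 ⟪y, ξ m⟫_ℂ) := by
  refine Tendsto.congr' ?_ tendsto_const_nhds
  filter_upwards [eventually_ge_atTop (m+1)] with j hj
  congr 1
  have : ∀ n, (lp.single 2 m (1:ℂ) : l2) n • ξ n = if n = m then ξ n else 0 := by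
    intro n
    by_cases hn : n = m
    · subst hn; simp [lp.single_apply_self]
    · simp [lp.single_apply_ne _ _ _ hn, hn]
  rw [Finset.sum_congr rfl fun n _ => this n, Finset.sum_ite_eq' (Finset.range j) m fun n => ξ n,
    if_pos (Finset.mem_range.2 hj)]

-- key formula: ⟪Cfun f, c⟫ = ⟪f, Qfun c⟫ for f ∈ domC, c ∈ domQ
lemma C_inner_Q (ξ : ℕ → H) (Qfun : l2 → H)
    (hQ : ∀ c ∈ domQ ξ, ∀ y : H,
      Tendsto (fun k : ℕ => ⟪y, ∑ n ∈ Finset.range k, c n • ξ n⟫_ℂ) atTop (𝓝 ⟪y, Qfun c⟫_ℂ))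
    {f : H} (hf : f ∈ domC ξ) {c : l2} (hc : c ∈ domQ ξ) :
    ⟪Cfun ξ f, c⟫_ℂ = ⟪f, Qfun c⟫_ℂ := by
  have hsum : HasSum (fun n => ⟪(Cfun ξ f) n, c n⟫_ℂ) ⟪Cfun ξ f, c⟫_ℂ :=
    lp.hasSum_inner (Cfun ξ f) c
  have h1 : Tendsto (fun k => ∑ n ∈ Finset.range k, ⟪(Cfun ξ f) n, c n⟫_ℂ) atTop
      (𝓝 ⟪Cfun ξ f, c⟫_ℂ) := hsum.tendsto_sum_nat
  have h2 : ∀ k, ∑ n ∈ Finset.range k, ⟪(Cfun ξ f) n, c n⟫_ℂ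
      = ⟪f, ∑ n ∈ Finset.range k, c n • ξ n⟫_ℂ := by
    intro k
    rw [psum_inner]
    refine Finset.sum_congr rfl fun n _ => ?_
    rw [Cfun_apply ξ hf]
    simp [RCLike.inner_apply, inner_conj_symm, mul_comm]
  rw [show (fun k => ∑ n ∈ Finset.range k, ⟪(Cfun ξ f) n, c n⟫_ℂ)
      = fun k => ⟪f, ∑ n ∈ Finset.range k, c n • ξ n⟫_ℂ from funext h2] at h1
  exact tendsto_nhds_unique h1 (hQ c hc f)

-- Part (i), third clause: Q* = C
lemma adjoint_char (ξ : ℕ → H) (Qfun : l2 → H)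
    (hQ : ∀ c ∈ domQ ξ, ∀ y : H,
      Tendsto (fun k : ℕ => ⟪y, ∑ n ∈ Finset.range k, c n • ξ n⟫_ℂ) atTop (𝓝 ⟪y, Qfun c⟫_ℂ))
    (f : H) (h : l2) :
    (∀ c ∈ domQ ξ, ⟪h, c⟫_ℂ = ⟪f, Qfun c⟫_ℂ) ↔ (f ∈ domC ξ ∧ Cfun ξ f = h) := by
  constructor
  · intro hyp
    have hQsingle : ∀ m : ℕ, Qfun (lp.single 2 m (1:ℂ)) = ξ m := fun m =>
      (Q_spec ξ Qfun hQ (single_weak ξ m)).2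
    have hval : ∀ m : ℕ, h m = ⟪ξ m, f⟫_ℂ := by
      intro m
      have h1 := hyp (lp.single 2 m (1:ℂ)) ⟨ξ m, single_weak ξ m⟩
      rw [hQsingle m, lp.inner_single_right] at h1
      have := congrArg (starRingEnd ℂ) h1
      simpa [inner_conj_symm] using this
    have hmem : f ∈ domC ξ := by
      have : (fun n => ⟪ξ n, f⟫_ℂ) = ⇑h := funext fun n => (hval n).symm
      simpa [domC, this] using lp.memℓp h
    refine ⟨hmem, lp.ext (funext fun n => ?_)⟩
    rw [Cfun_apply ξ hmem, hval]
  · rintro ⟨hf, rfl⟩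
    intro c hc
    exact C_inner_Q ξ Qfun hQ hf hc

-- linearity of Q on its domain
lemma Q_zero (ξ : ℕ → H) (Qfun : l2 → H)
    (hQ : ∀ c ∈ domQ ξ, ∀ y : H,
      Tendsto (fun k : ℕ => ⟪y, ∑ n ∈ Finset.range k, c n • ξ n⟫_ℂ) atTop (𝓝 ⟪y, Qfun c⟫_ℂ)) :
    (0 : l2) ∈ domQ ξ ∧ Qfun 0 = 0 := by
  apply Q_spec ξ Qfun hQ
  intro y
  have : ∀ k : ℕ, ⟪y, ∑ n ∈ Finset.range k, (0:l2) n • ξ n⟫_ℂ = ⟪y, (0:H)⟫_ℂ := by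
    intro k
    congr 1
    refine (Finset.sum_eq_zero fun n _ => ?_)
    rw [lp.coeFn_zero]
    simp
  rw [funext this]
  exact tendsto_const_nhds

lemma Q_add (ξ : ℕ → H) (Qfun : l2 → H)
    (hQ : ∀ c ∈ domQ ξ, ∀ y : H,
      Tendsto (fun k : ℕ => ⟪y, ∑ n ∈ Finset.range k, c n • ξ n⟫_ℂ) atTop (𝓝 ⟪y, Qfun c⟫_ℂ))
    {c c' : l2} (hc : c ∈ domQ ξ) (hc' : c' ∈ domQ ξ) :
    c + c' ∈ domQ ξ ∧ Qfun (c + c') = Qfun c + Qfun c' := by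
  apply Q_spec ξ Qfun hQ
  intro y
  have h12 := (hQ c hc y).add (hQ c' hc' y)
  rw [← inner_add_right] at h12
  refine h12.congr fun k => ?_
  rw [← inner_add_right, ← Finset.sum_add_distrib]
  congr 1
  refine Finset.sum_congr rfl fun n _ => ?_
  rw [lp.coeFn_add]
  simp [add_smul]

lemma Q_smul (ξ : ℕ → H) (Qfun : l2 → H)
    (hQ : ∀ c ∈ domQ ξ, ∀ y : H,
      Tendsto (fun k : ℕ => ⟪y, ∑ n ∈ Finset.range k, c n • ξ n⟫_ℂ) atTop (𝓝 ⟪y, Qfun c⟫_ℂ))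
    {c : l2} (hc : c ∈ domQ ξ) (a : ℂ) :
    a • c ∈ domQ ξ ∧ Qfun (a • c) = a • Qfun c := by
  apply Q_spec ξ Qfun hQ
  intro y
  have h1 := (hQ c hc y).const_mul a
  rw [← inner_smul_right] at h1
  refine h1.congr fun k => ?_
  rw [← inner_smul_right, Finset.smul_sum]
  congr 1
  refine Finset.sum_congr rfl fun n _ => ?_
  rw [lp.coeFn_smul]
  simp [smul_smul]


-- the central closure computation
lemma closure_graph (ξ : ℕ → H) (Qfun : l2 → H)
    (hQ : ∀ c ∈ domQ ξ, ∀ y : H,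
      Tendsto (fun k : ℕ => ⟪y, ∑ n ∈ Finset.range k, c n • ξ n⟫_ℂ) atTop (𝓝 ⟪y, Qfun c⟫_ℂ)) :
    closure {p : l2 × H | p.1 ∈ domQ ξ ∧ Qfun p.1 = p.2}
      = {p : l2 × H | ∀ f ∈ domC ξ, ⟪p.2, f⟫_ℂ = ⟪p.1, Cfun ξ f⟫_ℂ} := by
  classical
  set e : WithLp 2 (l2 × H) ≃L[ℂ] l2 × H := WithLp.prodContinuousLinearEquiv 2 ℂ l2 H with he
  have hefst : ∀ x : WithLp 2 (l2 × H), (e x).1 = x.fst := fun x => rfl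
  have hesnd : ∀ x : WithLp 2 (l2 × H), (e x).2 = x.snd := fun x => rfl
  have hsfst : ∀ p : l2 × H, (e.symm p).fst = p.1 := fun p => rfl
  have hssnd : ∀ p : l2 × H, (e.symm p).snd = p.2 := fun p => rfl
  set G : Submodule ℂ (WithLp 2 (l2 × H)) :=
    { carrier := {x | x.fst ∈ domQ ξ ∧ Qfun x.fst = x.snd}
      add_mem' := by
        rintro x y ⟨hx1, hx2⟩ ⟨hy1, hy2⟩
        have h := Q_add ξ Qfun hQ hx1 hy1
        refine ⟨by rw [WithLp.add_fst]; exact h.1, ?_⟩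
        rw [WithLp.add_fst, WithLp.add_snd, h.2, hx2, hy2]
      zero_mem' := by
        have h := Q_zero ξ Qfun hQ
        exact ⟨by rw [WithLp.zero_fst]; exact h.1, by rw [WithLp.zero_fst, WithLp.zero_snd, h.2]⟩
      smul_mem' := by
        rintro a x ⟨hx1, hx2⟩
        have h := Q_smul ξ Qfun hQ hx1 a
        refine ⟨by rw [WithLp.smul_fst]; exact h.1, ?_⟩
        rw [WithLp.smul_fst, WithLp.smul_snd, h.2, hx2] } with hG
  -- conjugation helper
  have conj0 : ∀ a b : ℂ, a + b = 0 ↔ (starRingEnd ℂ) a + (starRingEnd ℂ) b = 0 := by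
    intro a b
    constructor
    · intro h; rw [← map_add, h, map_zero]
    · intro h
      have := congrArg (starRingEnd ℂ) h
      simpa [map_add] using this
  -- characterization of Gᗮ
  have horth : ∀ v : WithLp 2 (l2 × H),
      v ∈ Gᗮ ↔ (v.snd ∈ domC ξ ∧ Cfun ξ v.snd = -v.fst) := by
    intro v
    rw [Submodule.mem_orthogonal]
    rw [← adjoint_char ξ Qfun hQ v.snd (-v.fst)]
    constructor
    · intro hv c hc
      have h1 := hv (e.symm (c, Qfun c)) ⟨hc, rfl⟩
      rw [WithLp.prod_inner_apply, WithLp.ofLp_fst, WithLp.ofLp_fst, WithLp.ofLp_snd, WithLp.ofLp_snd] at h1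
      rw [hsfst, hssnd] at h1
      have h2 := (conj0 _ _).1 h1
      rw [inner_conj_symm, inner_conj_symm] at h2
      rw [inner_neg_left]
      linear_combination -h2
    · rintro hadj u ⟨hu1, hu2⟩
      rw [WithLp.prod_inner_apply, WithLp.ofLp_fst, WithLp.ofLp_fst, WithLp.ofLp_snd, WithLp.ofLp_snd]
      rw [conj0]
      rw [inner_conj_symm, inner_conj_symm]
      have h3 := hadj u.fst hu1
      rw [inner_neg_left] at h3
      rw [hu2] at h3
      linear_combination -h3
  have hOO : ∀ x : WithLp 2 (l2 × H),
      x ∈ Gᗮᗮ ↔ ∀ f ∈ domC ξ, ⟪x.snd, f⟫_ℂ = ⟪x.fst, Cfun ξ f⟫_ℂ := by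
    intro x
    rw [Submodule.mem_orthogonal]
    constructor
    · intro hx f hf
      have hv : (e.symm (-(Cfun ξ f), f)) ∈ Gᗮ := by
        rw [horth, hsfst, hssnd]
        exact ⟨hf, by rw [neg_neg]⟩
      have h1 := hx _ hv
      rw [WithLp.prod_inner_apply, WithLp.ofLp_fst, WithLp.ofLp_fst, WithLp.ofLp_snd, WithLp.ofLp_snd, hsfst, hssnd, inner_neg_left] at h1
      rw [← inner_conj_symm x.snd f, ← inner_conj_symm x.fst (Cfun ξ f)]
      exact congrArg _ (by linear_combination h1)
    · intro hx v hv
      rw [horth] at hv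
      obtain ⟨hv1, hv2⟩ := hv
      have h1 := hx v.snd hv1
      rw [hv2, inner_neg_right] at h1
      rw [WithLp.prod_inner_apply, WithLp.ofLp_fst, WithLp.ofLp_fst, WithLp.ofLp_snd, WithLp.ofLp_snd, conj0, inner_conj_symm, inner_conj_symm]
      linear_combination h1
  have himg : {p : l2 × H | p.1 ∈ domQ ξ ∧ Qfun p.1 = p.2} = e '' (G : Set _) := by
    ext p
    constructor
    · intro hp
      exact ⟨e.symm p, ⟨hp.1, hp.2⟩, e.apply_symm_apply p⟩
    · rintro ⟨x, hx, rfl⟩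
      exact ⟨hx.1, hx.2⟩
  have hcl : closure (G : Set (WithLp 2 (l2 × H))) = (Gᗮᗮ : Set _) := by
    rw [Submodule.orthogonal_orthogonal_eq_closure]
    exact (Submodule.topologicalClosure_coe G).symm
  have himg2 : closure (e '' (G : Set _)) = e '' closure (G : Set _) := by
    exact (Homeomorph.image_closure e.toHomeomorph _).symm
  rw [himg, himg2, hcl]
  ext p
  constructor
  · rintro ⟨x, hx, rfl⟩
    exact (hOO x).1 hx
  · intro hp
    exact ⟨e.symm p, (hOO _).2 hp, e.apply_symm_apply p⟩


-- domC as a submodule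
def domCsub (ξ : ℕ → H) : Submodule ℂ H where
  carrier := domC ξ
  zero_mem' := by
    have : (fun n => ⟪ξ n, (0:H)⟫_ℂ) = 0 := by funext n; simp
    exact (show Memℓp (fun n => ⟪ξ n, (0:H)⟫_ℂ) 2 by
      rw [this]; exact zero_memℓp (p := (2:ℝ≥0∞)) (E := fun _ : ℕ => ℂ))
  add_mem' := by
    intro f g hf hg
    have : (fun n => ⟪ξ n, f + g⟫_ℂ) = (fun n => ⟪ξ n, f⟫_ℂ) + fun n => ⟪ξ n, g⟫_ℂ := by
      funext n; simp [inner_add_right]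
    exact (show Memℓp (fun n => ⟪ξ n, f + g⟫_ℂ) 2 by rw [this]; exact Memℓp.add hf hg)
  smul_mem' := by
    intro a f hf
    have : (fun n => ⟪ξ n, a • f⟫_ℂ) = a • fun n => ⟪ξ n, f⟫_ℂ := by
      funext n; simp [inner_smul_right]
    exact (show Memℓp (fun n => ⟪ξ n, a • f⟫_ℂ) 2 by rw [this]; exact Memℓp.const_smul hf a)

-- part (iii)
lemma part_iii (ξ : ℕ → H) (Qfun : l2 → H)
    (hQ : ∀ c ∈ domQ ξ, ∀ y : H,
      Tendsto (fun k : ℕ => ⟪y, ∑ n ∈ Finset.range k, c n • ξ n⟫_ℂ) atTop (𝓝 ⟪y, Qfun c⟫_ℂ)) :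
    (∀ L : H, ((0 : l2), L) ∈ closure {p : l2 × H | p.1 ∈ domQ ξ ∧ Qfun p.1 = p.2} → L = 0)
      ↔ Dense (domC ξ) := by
  rw [closure_graph ξ Qfun hQ]
  have hmem : ∀ L : H, (((0 : l2), L) ∈
      {p : l2 × H | ∀ f ∈ domC ξ, ⟪p.2, f⟫_ℂ = ⟪p.1, Cfun ξ f⟫_ℂ})
        ↔ ∀ f ∈ domC ξ, ⟪L, f⟫_ℂ = 0 := by
    intro L
    simp [inner_zero_left]
  constructor
  · intro hyp
    by_contra hnd
    have h1 : ¬ (domCsub ξ).topologicalClosure = ⊤ := by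
      intro h
      exact hnd (Submodule.dense_iff_topologicalClosure_eq_top.2 h)
    have h2 : (domCsub ξ)ᗮ ≠ ⊥ := by
      intro h
      exact h1 (Submodule.topologicalClosure_eq_top_iff.2 h)
    obtain ⟨L, hL, hL0⟩ := Submodule.exists_mem_ne_zero_of_ne_bot h2
    refine hL0 (hyp L ((hmem L).2 fun f hf => ?_))
    have := (Submodule.mem_orthogonal _ _).1 hL f hf
    rw [← inner_conj_symm, this, map_zero]
  · intro hd L hL
    have h1 := (hmem L).1 hL
    have h2 : ∀ f : H, ⟪L, f⟫_ℂ = 0 := by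
      have hc : IsClosed {f : H | ⟪L, f⟫_ℂ = 0} :=
        isClosed_eq (continuous_const.inner continuous_id) continuous_const
      intro f
      have : f ∈ closure (domC ξ) := hd.closure_eq ▸ Set.mem_univ f
      exact hc.closure_subset_iff.2 (fun g hg => h1 g hg) this
    simpa [inner_self_eq_zero] using h2 L

-- part (iv)
lemma part_iv (ξ : ℕ → H) (Qfun : l2 → H)
    (hQ : ∀ c ∈ domQ ξ, ∀ y : H,
      Tendsto (fun k : ℕ => ⟪y, ∑ n ∈ Finset.range k, c n • ξ n⟫_ℂ) atTop (𝓝 ⟪y, Qfun c⟫_ℂ)) :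
    IsClosed {p : l2 × H | p.1 ∈ domQ ξ ∧ Qfun p.1 = p.2}
      ↔ (Dense (domC ξ) ∧ ∀ (c : l2) (L : H),
          (∀ f ∈ domC ξ, ⟪L, f⟫_ℂ = ⟪c, Cfun ξ f⟫_ℂ) ↔ (c ∈ domQ ξ ∧ Qfun c = L)) := by
  constructor
  · intro hcl
    have hce := hcl.closure_eq
    constructor
    · refine (part_iii ξ Qfun hQ).1 fun L hL => ?_
      rw [hce] at hL
      have := hL.2
      rw [(Q_zero ξ Qfun hQ).2] at this
      exact this.symm
    · intro c L
      have : ((c, L) ∈ closure {p : l2 × H | p.1 ∈ domQ ξ ∧ Qfun p.1 = p.2})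
          ↔ ((c, L) ∈ {p : l2 × H | p.1 ∈ domQ ξ ∧ Qfun p.1 = p.2}) := by rw [hce]
      rw [closure_graph ξ Qfun hQ] at this
      exact this
  · rintro ⟨-, hcond⟩
    have : {p : l2 × H | p.1 ∈ domQ ξ ∧ Qfun p.1 = p.2}
        = {p : l2 × H | ∀ f ∈ domC ξ, ⟪p.2, f⟫_ℂ = ⟪p.1, Cfun ξ f⟫_ℂ} := by
      ext p
      exact (hcond p.1 p.2).symm
    rw [this, ← closure_graph ξ Qfun hQ]
    exact isClosed_closure

lemma W_spec (ξ : ℕ → H) (Wfun : H → H)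
    (hW : ∀ f ∈ domW ξ, ∀ y : H,
      Tendsto (fun k : ℕ => ⟪y, ∑ n ∈ Finset.range k, ⟪ξ n, f⟫_ℂ • ξ n⟫_ℂ) atTop
        (𝓝 ⟪y, Wfun f⟫_ℂ))
    {f L : H}
    (h : ∀ y : H, Tendsto (fun k : ℕ => ⟪y, ∑ n ∈ Finset.range k, ⟪ξ n, f⟫_ℂ • ξ n⟫_ℂ) atTop
      (𝓝 ⟪y, L⟫_ℂ)) : f ∈ domW ξ ∧ Wfun f = L := by
  have hf : f ∈ domW ξ := ⟨L, h⟩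
  exact ⟨hf, ext_inner_left ℂ fun y => tendsto_nhds_unique (hW f hf y) (h y)⟩

lemma domW_subset_domC (ξ : ℕ → H) : domW ξ ⊆ domC ξ := by
  rintro f ⟨L, hL⟩
  have h0 := hL f
  have h1 : ∀ k : ℕ, ⟪f, ∑ n ∈ Finset.range k, ⟪ξ n, f⟫_ℂ • ξ n⟫_ℂ
      = ((∑ n ∈ Finset.range k, ‖⟪ξ n, f⟫_ℂ‖ ^ 2 : ℝ) : ℂ) := by
    intro k
    rw [psum_inner]
    push_cast
    refine Finset.sum_congr rfl fun n _ => ?_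
    rw [← inner_conj_symm f (ξ n), RCLike.mul_conj]
    norm_num
  rw [funext h1] at h0
  have h2 : Tendsto (fun k : ℕ => ∑ n ∈ Finset.range k, ‖⟪ξ n, f⟫_ℂ‖ ^ 2) atTop
      (𝓝 ((⟪f, L⟫_ℂ).re)) := by
    have h3 := (Complex.continuous_re.tendsto _).comp h0
    exact h3.congr fun k => Complex.ofReal_re _
  have hmono : Monotone fun k : ℕ => ∑ n ∈ Finset.range k, ‖⟪ξ n, f⟫_ℂ‖ ^ 2 := by
    intro a b hab
    exact Finset.sum_le_sum_of_subset_of_nonneg (Finset.range_subset_range.2 hab)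
      fun n _ _ => sq_nonneg _
  have hsum : Summable fun n => ‖⟪ξ n, f⟫_ℂ‖ ^ 2 :=
    summable_of_sum_range_le (fun n => sq_nonneg _) (hmono.ge_of_tendsto h2)
  apply memℓp_gen
  have ht : ((2:ℝ≥0∞)).toReal = (2:ℝ) := by norm_num
  simp only [ht]
  refine hsum.congr fun n => ?_
  rw [show ((2:ℝ)) = ((2:ℕ):ℝ) by norm_num, Real.rpow_natCast]

lemma Wsum_eq_Qsum (ξ : ℕ → H) {f : H} (hf : f ∈ domC ξ) (k : ℕ) :
    ∑ n ∈ Finset.range k, (Cfun ξ f) n • ξ n = ∑ n ∈ Finset.range k, ⟪ξ n, f⟫_ℂ • ξ n :=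
  Finset.sum_congr rfl fun n _ => by rw [Cfun_apply ξ hf]


/-- For any sequence `ξ` in `H`, with `Dfun`, `Sfun`, `Qfun`, `Wfun` the
synthesis, frame, weak synthesis and weak frame operators (each pinned down on its domain):
(i) `Q_ξ` is densely defined, `D_ξ ⊆ Q_ξ` and `Q_ξ* = C_ξ`;
(ii) if `D(C_ξ)` is dense then `Q_ξ ⊆ C_ξ*`;
(iii) `Q_ξ` is closable iff `D(C_ξ)` is dense;
(iv) `Q_ξ` is closed iff `D(C_ξ)` is dense and `C_ξ* = Q_ξ`;
(v) `S_ξ ⊆ W_ξ` and `W_ξ = Q_ξ C_ξ` (equality of domains included). -/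
theorem statement6 (ξ : ℕ → H)
    (Dfun : l2 → H)
    (hD : ∀ c ∈ domD ξ,
      Tendsto (fun k : ℕ => ∑ n ∈ Finset.range k, c n • ξ n) atTop (𝓝 (Dfun c)))
    (Sfun : H → H)
    (hS : ∀ f ∈ domS ξ,
      Tendsto (fun k : ℕ => ∑ n ∈ Finset.range k, ⟪ξ n, f⟫_ℂ • ξ n) atTop (𝓝 (Sfun f)))
    (Qfun : l2 → H)
    (hQ : ∀ c ∈ domQ ξ, ∀ y : H,
      Tendsto (fun k : ℕ => ⟪y, ∑ n ∈ Finset.range k, c n • ξ n⟫_ℂ) atTop (𝓝 ⟪y, Qfun c⟫_ℂ))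
    (Wfun : H → H)
    (hW : ∀ f ∈ domW ξ, ∀ y : H,
      Tendsto (fun k : ℕ => ⟪y, ∑ n ∈ Finset.range k, ⟪ξ n, f⟫_ℂ • ξ n⟫_ℂ) atTop
        (𝓝 ⟪y, Wfun f⟫_ℂ)) :
    -- (i) Q_ξ densely defined, D_ξ ⊆ Q_ξ, Q_ξ* = C_ξ
    (Dense (domQ ξ)
      ∧ (domD ξ ⊆ domQ ξ ∧ ∀ c ∈ domD ξ, Qfun c = Dfun c)
      ∧ ∀ (f : H) (h : l2),
          (∀ c ∈ domQ ξ, ⟪h, c⟫_ℂ = ⟪f, Qfun c⟫_ℂ) ↔ (f ∈ domC ξ ∧ Cfun ξ f = h))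
    -- (ii)
    ∧ (Dense (domC ξ) → ∀ c ∈ domQ ξ, ∀ f ∈ domC ξ, ⟪Qfun c, f⟫_ℂ = ⟪c, Cfun ξ f⟫_ℂ)
    -- (iii)
    ∧ ((∀ L : H, ((0 : l2), L) ∈ closure {p : l2 × H | p.1 ∈ domQ ξ ∧ Qfun p.1 = p.2} → L = 0)
        ↔ Dense (domC ξ))
    -- (iv)
    ∧ (IsClosed {p : l2 × H | p.1 ∈ domQ ξ ∧ Qfun p.1 = p.2}
        ↔ (Dense (domC ξ) ∧ ∀ (c : l2) (L : H),
            (∀ f ∈ domC ξ, ⟪L, f⟫_ℂ = ⟪c, Cfun ξ f⟫_ℂ) ↔ (c ∈ domQ ξ ∧ Qfun c = L)))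
    -- (v) S_ξ ⊆ W_ξ and W_ξ = Q_ξ C_ξ
    ∧ ((domS ξ ⊆ domW ξ ∧ ∀ f ∈ domS ξ, Wfun f = Sfun f)
        ∧ (domW ξ = {f : H | f ∈ domC ξ ∧ Cfun ξ f ∈ domQ ξ}
            ∧ ∀ f ∈ domW ξ, Wfun f = Qfun (Cfun ξ f))) := by
  refine ⟨⟨domQ_dense ξ, ⟨fun c hc => (Q_spec ξ Qfun hQ
      (fun y => Tendsto.inner tendsto_const_nhds (hD c hc))).1,
      fun c hc => (Q_spec ξ Qfun hQ
      (fun y => Tendsto.inner tendsto_const_nhds (hD c hc))).2⟩,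
      adjoint_char ξ Qfun hQ⟩, ?_, part_iii ξ Qfun hQ, part_iv ξ Qfun hQ, ⟨?_, ?_, ?_⟩⟩
  · intro _ c hc f hf
    have h2 := congrArg (starRingEnd ℂ) (C_inner_Q ξ Qfun hQ hf hc)
    rw [inner_conj_symm, inner_conj_symm] at h2
    exact h2.symm
  · exact ⟨fun f hf => (W_spec ξ Wfun hW
      (fun y => Tendsto.inner tendsto_const_nhds (hS f hf))).1,
      fun f hf => (W_spec ξ Wfun hW
      (fun y => Tendsto.inner tendsto_const_nhds (hS f hf))).2⟩
  · ext f
    constructor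
    · intro hw
      have hfC := domW_subset_domC ξ hw
      obtain ⟨L, hL⟩ := hw
      exact ⟨hfC, ⟨L, fun y => (hL y).congr fun k => by rw [Wsum_eq_Qsum ξ hfC]⟩⟩
    · rintro ⟨hfC, hq⟩
      exact ⟨Qfun (Cfun ξ f), fun y => (hQ _ hq y).congr
        fun k => by rw [Wsum_eq_Qsum ξ hfC]⟩
  · intro f hw
    have hfC := domW_subset_domC ξ hw
    obtain ⟨L, hL⟩ := hw
    have hq : Cfun ξ f ∈ domQ ξ :=
      ⟨L, fun y => (hL y).congr fun k => by rw [Wsum_eq_Qsum ξ hfC]⟩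
    exact (W_spec ξ Wfun hW (fun y => (hQ _ hq y).congr
      fun k => by rw [Wsum_eq_Qsum ξ hfC])).2
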